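/- Every finite specific set of varying S-probabilities is a Boolean algebra (as a poset ordered pointwise with complementation p ↦ 1−p). -/

import Mathlib

/-- An `S`-probability: a function from `S` to `[0,1]`. -/
def IsProb {S : Type*} (p : S → ℝ) : Prop := ∀ s, 0 ≤ p s ∧ p s ≤ 1

/-- `p` and `q` are disjoint in `P`: the only common lower bound in `P` is `0`. -/
def Disj {S : Type*} (P : Set (S → ℝ)) (p q : S → ℝ) : Prop :=
  ∀ x ∈ P, x ≤ p → x ≤ q → x = 0

/-- `r` is the supremum of `p` and `q` within `P`. -/
def IsSupIn {S : Type*} (P : Set (S → ℝ)) (p q r : S → ℝ) : Prop :=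
  r ∈ P ∧ p ≤ r ∧ q ≤ r ∧ ∀ x ∈ P, p ≤ x → q ≤ x → r ≤ x

/-- `r` is the infimum of `p` and `q` within `P`. -/
def IsInfIn {S : Type*} (P : Set (S → ℝ)) (p q r : S → ℝ) : Prop :=
  r ∈ P ∧ r ≤ p ∧ r ≤ q ∧ ∀ x ∈ P, x ≤ p → x ≤ q → x ≤ r

/-- A specific set of `S`-probabilities. -/
def Specific {S : Type*} (P : Set (S → ℝ)) : Prop :=
  (∀ p ∈ P, IsProb p) ∧ (0 : S → ℝ) ∈ P ∧ (1 : S → ℝ) ∈ P ∧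
  (∀ p ∈ P, (1 - p) ∈ P) ∧
  (∀ p ∈ P, ∀ q ∈ P, Disj P p q → p + q ∈ P)

/-- A varying `S`-probability: neither `≤ 1/2` nor `≥ 1/2` unless `0` or `1`. -/
def Varying {S : Type*} (p : S → ℝ) : Prop :=
  p ≠ 0 → p ≠ 1 → ¬(p ≤ fun _ => (1/2 : ℝ)) ∧ ¬((fun _ => (1/2 : ℝ)) ≤ p)

/-- A generalized field of events. -/
def GFE {S : Type*} (P : Set (S → ℝ)) : Prop :=
  (∀ p ∈ P, IsProb p) ∧ (0 : S → ℝ) ∈ P ∧ (1 : S → ℝ) ∈ P ∧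
  (∀ p ∈ P, (1 - p) ∈ P) ∧
  (∀ p ∈ P, ∀ q ∈ P, p ≤ 1 - q → p + q ∈ P)

/-- Boolean: disjoint elements are orthogonal. -/
def BooleanSet {S : Type*} (P : Set (S → ℝ)) : Prop :=
  ∀ p ∈ P, ∀ q ∈ P, Disj P p q → p ≤ 1 - q

/-- Complemented: `p ∧ p' = 0` for every `p ∈ P`. -/
def Complemented {S : Type*} (P : Set (S → ℝ)) : Prop :=
  ∀ p ∈ P, Disj P p (1 - p)

/-- A structured set of `S`-probabilities. -/
def Structured {S : Type*} (P : Set (S → ℝ)) : Prop :=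
  (∀ p ∈ P, IsProb p) ∧ (0 : S → ℝ) ∈ P ∧ (1 : S → ℝ) ∈ P ∧
  (∀ p ∈ P, (1 - p) ∈ P) ∧
  (∀ p ∈ P, ∀ q ∈ P, ∀ r ∈ P, p ≤ 1 - q → r ≤ 1 - q → Disj P p r → p + q + r ∈ P)

/-- A `∨`-specific set of `S`-probabilities: specific, and the sum of disjoint
elements is their supremum in `P`. -/
def VSpecific {S : Type*} (P : Set (S → ℝ)) : Prop :=
  Specific P ∧ ∀ p ∈ P, ∀ q ∈ P, Disj P p q → IsSupIn P p q (p + q)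

/-- A weakly structured set of `S`-probabilities. -/
def WeaklyStructured {S : Type*} (P : Set (S → ℝ)) : Prop :=
  (∀ p ∈ P, IsProb p) ∧ (0 : S → ℝ) ∈ P ∧ (1 : S → ℝ) ∈ P ∧
  (∀ p ∈ P, (1 - p) ∈ P) ∧
  (∀ p ∈ P, ∀ q ∈ P, ∀ r ∈ P, p ≤ 1 - q → r ≤ 1 - q → Disj P p r → p + q + r ≤ 1)

namespace Stmt7

variable {S : Type*} {P : Set (S → ℝ)}

/-- Atom of `P`: minimal nonzero element. -/
def Atom (P : Set (S → ℝ)) (a : S → ℝ) : Prop :=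
  a ∈ P ∧ a ≠ 0 ∧ ∀ x ∈ P, x ≤ a → x = 0 ∨ x = a

section basic
variable (hP : Specific P) (hv : ∀ p ∈ P, Varying p)
include hP

lemma prob {p : S → ℝ} (hp : p ∈ P) : ∀ s, 0 ≤ p s ∧ p s ≤ 1 := hP.1 p hp

lemma compl_mem {p : S → ℝ} (hp : p ∈ P) : (1 - p) ∈ P := hP.2.2.2.1 p hp

lemma add_mem {p q : S → ℝ} (hp : p ∈ P) (hq : q ∈ P) (h : Disj P p q) :
    p + q ∈ P := hP.2.2.2.2 p hp q hq h

include hv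

lemma zero_of_half {x : S → ℝ} (hx : x ∈ P) (h : ∀ s, x s ≤ 1/2) : x = 0 := by
  by_cases h0 : x = 0
  · exact h0
  by_cases h1 : x = (1 : S → ℝ)
  · funext s
    have := h s
    rw [h1] at this
    norm_num at this
  · exact absurd (Pi.le_def.mpr fun s => h s) ((hv x hx h0 h1).1)

lemma zero_of_le_both {x p : S → ℝ} (hx : x ∈ P) (hp : p ∈ P)
    (h1 : x ≤ p) (h2 : x ≤ 1 - p) : x = 0 := by
  refine zero_of_half hP hv hx fun s => ?_
  have := h1 s
  have := h2 s
  have := (prob hP hp s).2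
  simp only [Pi.sub_apply, Pi.one_apply] at *
  linarith

lemma disj_of_le {p q : S → ℝ} (hp : p ∈ P) (hq : q ∈ P) (hpq : p ≤ q) :
    Disj P p (1 - q) := fun x hx hxp hxq =>
  zero_of_le_both hP hv hx hq (hxp.trans hpq) hxq

lemma sub_mem {p q : S → ℝ} (hp : p ∈ P) (hq : q ∈ P) (hpq : p ≤ q) :
    q - p ∈ P := by
  have h1 : (1 - q) ∈ P := compl_mem hP hq
  have h2 : p + (1 - q) ∈ P := add_mem hP hp h1 (disj_of_le hP hv hp hq hpq)
  have h3 : (1 : S → ℝ) - (p + (1 - q)) ∈ P := compl_mem hP h2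
  have : (1 : S → ℝ) - (p + (1 - q)) = q - p := by ext s; simp; ring
  rwa [this] at h3

lemma disj_symm {p q : S → ℝ} (h : Disj P p q) : Disj P q p :=
  fun x hx h1 h2 => h x hx h2 h1

lemma atom_le_or_disj {a q : S → ℝ} (ha : Atom P a) (hq : q ∈ P) :
    a ≤ q ∨ Disj P a q := by
  by_cases h : a ≤ q
  · exact Or.inl h
  · refine Or.inr fun x hx hxa hxq => ?_
    rcases ha.2.2 x hx hxa with h0 | rfl
    · exact h0
    · exact absurd hxq h

lemma atom_le_or_add_mem {a q : S → ℝ} (ha : Atom P a) (hq : q ∈ P) :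
    a ≤ q ∨ (a + q ∈ P ∧ ∀ s, a s + q s ≤ 1) := by
  rcases atom_le_or_disj hP hv ha hq with h | h
  · exact Or.inl h
  · have hm := add_mem hP ha.1 hq h
    exact Or.inr ⟨hm, fun s => (prob hP hm s).2⟩

lemma exists_gt_half {a : S → ℝ} (ha : a ∈ P) (h0 : a ≠ 0) (h1 : a ≠ 1) :
    ∃ s, 1/2 < a s := by
  have := (hv a ha h0 h1).1
  rw [Pi.le_def] at this
  push_neg at this
  obtain ⟨s, hs⟩ := this
  exact ⟨s, by simpa using hs⟩

end basic

section fin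
variable (hP : Specific P) (hv : ∀ p ∈ P, Varying p) (hfin : P.Finite)
include hP hv hfin

lemma exists_atom_le {p : S → ℝ} (hp : p ∈ P) (hp0 : p ≠ 0) :
    ∃ a, Atom P a ∧ a ≤ p := by
  classical
  set T : Finset (S → ℝ) := hfin.toFinset.filter (fun x => x ≤ p ∧ x ≠ 0) with hT
  have hpT : p ∈ T := by
    simp [hT, Set.Finite.mem_toFinset, hp, hp0]
  obtain ⟨a, haT, hmin⟩ : ∃ a ∈ T, ∀ x ∈ T, ¬ x < a := by
    obtain ⟨a, ha⟩ := Finset.exists_minimal (s := T) ⟨p, hpT⟩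
    exact ⟨a, ha.1, fun x hx hlt => hlt.not_ge (ha.2 hx hlt.le)⟩
  simp only [hT, Finset.mem_filter, Set.Finite.mem_toFinset] at haT
  refine ⟨a, ⟨haT.1, haT.2.2, fun x hx hxa => ?_⟩, haT.2.1⟩
  by_cases hx0 : x = 0
  · exact Or.inl hx0
  · right
    have hxT : x ∈ T := by
      simp [hT, Set.Finite.mem_toFinset, hx, hx0, hxa.trans haT.2.1]
    by_contra hne
    exact hmin x hxT (lt_of_le_of_ne hxa hne)

end fin

section core
variable (hP : Specific P) (hv : ∀ p ∈ P, Varying p)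
include hP hv

set_option maxHeartbeats 1000000 in
lemma crux2 {a c p : S → ℝ} (ha : Atom P a) (hc : Atom P c) (hp : p ∈ P)
    (hac : a ≠ c) (hle1 : a ≤ p + c) (hle2 : c ≤ p + a)
    (hap : ¬ a ≤ p) (hcp : ¬ c ≤ p) : False := by
  have hDap : Disj P a p := (atom_le_or_disj hP hv ha hp).resolve_left hap
  have hDcp : Disj P c p := (atom_le_or_disj hP hv hc hp).resolve_left hcp
  have hDac : Disj P a c := by
    intro x hx hxa hxc
    rcases ha.2.2 x hx hxa with h0 | rfl
    · exact h0
    · rcases hc.2.2 x hx hxc with h0 | h1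
      · exact h0
      · exact absurd h1 hac
  have hapP : a + p ∈ P := add_mem hP ha.1 hp hDap
  have hcpP : c + p ∈ P := add_mem hP hc.1 hp hDcp
  have hacP : a + c ∈ P := add_mem hP ha.1 hc.1 hDac
  have hap1 : ∀ s, a s + p s ≤ 1 := fun s => by
    have := (prob hP hapP s).2; simpa using this
  have hcp1 : ∀ s, c s + p s ≤ 1 := fun s => by
    have := (prob hP hcpP s).2; simpa using this
  have hac1 : ∀ s, a s + c s ≤ 1 := fun s => by
    have := (prob hP hacP s).2; simpa using this
  have ha0 : ∀ s, 0 ≤ a s := fun s => (prob hP ha.1 s).1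
  have hc0 : ∀ s, 0 ≤ c s := fun s => (prob hP hc.1 s).1
  have hp0 : ∀ s, 0 ≤ p s := fun s => (prob hP hp s).1
  -- a ≠ 1 and c ≠ 1
  have ha1 : a ≠ 1 := by
    rintro rfl
    refine hc.2.1 (funext fun s => ?_)
    have h1' := hac1 s
    have h2' := hc0 s
    simp only [Pi.one_apply] at h1'
    simp only [Pi.zero_apply]
    linarith only [h1', h2']
  have hc1 : c ≠ 1 := by
    rintro rfl
    refine ha.2.1 (funext fun s => ?_)
    have h1' := hac1 s
    have h2' := ha0 s
    simp only [Pi.one_apply] at h1'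
    simp only [Pi.zero_apply]
    linarith only [h1', h2']
  obtain ⟨s₀, hs₀⟩ := exists_gt_half hP hv ha.1 ha.2.1 ha1
  obtain ⟨s₁, hs₁⟩ := exists_gt_half hP hv hc.1 hc.2.1 hc1
  have hcs₀ : c s₀ < 1/2 := by linarith only [hac1 s₀, hs₀]
  have hps₀ : p s₀ < 1/2 := by linarith only [hap1 s₀, hs₀]
  have has₁ : a s₁ < 1/2 := by linarith only [hac1 s₁, hs₁]
  have hps₁ : p s₁ < 1/2 := by linarith only [hcp1 s₁, hs₁]
  -- the sequence (n+1)(a-c)+p lies in P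
  have key : ∀ n : ℕ, (fun s => ((n : ℝ) + 1) * (a s - c s) + p s) ∈ P := by
    intro n
    induction n with
    | zero =>
      have h := sub_mem hP hv hc.1 (add_mem hP hp ha.1 (disj_symm hP hv hDap)) hle2
      have heq2 : (fun s => (((0:ℕ) : ℝ) + 1) * (a s - c s) + p s) = p + a - c := by
        funext s; simp; ring
      rwa [heq2]
    | succ n ih =>
      set B : S → ℝ := fun s => ((n : ℝ) + 1) * (a s - c s) + p s with hB
      have hnotaB : ¬ a ≤ B := by
        intro h
        have hth := h s₁
        simp only [hB] at hth
        have hmul : ((n:ℝ)) * (a s₁ - c s₁) ≤ 0 :=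
          mul_nonpos_of_nonneg_of_nonpos (Nat.cast_nonneg n) (by linarith only [has₁, hs₁])
        have hexp : ((n:ℝ) + 1) * (a s₁ - c s₁)
            = (n:ℝ) * (a s₁ - c s₁) + (a s₁ - c s₁) := by ring
        linarith only [hth, hmul, hexp, hs₁, hps₁]
      have hDaB : Disj P a B := by
        intro x hx hxa hxB
        rcases ha.2.2 x hx hxa with h0 | rfl
        · exact h0
        · exact absurd hxB hnotaB
      have hA : a + B ∈ P := add_mem hP ha.1 ih hDaB
      have hcA : c ≤ a + B := by
        rcases atom_le_or_disj hP hv hc hA with h | hD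
        · exact h
        · exfalso
          have hm : c + (a + B) ∈ P := add_mem hP hc.1 hA hD
          have hth := (prob hP hm s₀).2
          simp only [Pi.add_apply, hB] at hth
          have hmul : 0 ≤ ((n:ℝ)) * (a s₀ - c s₀) :=
            mul_nonneg (Nat.cast_nonneg n) (by linarith only [hs₀, hcs₀])
          have hexp : ((n:ℝ) + 1) * (a s₀ - c s₀)
              = (n:ℝ) * (a s₀ - c s₀) + (a s₀ - c s₀) := by ring
          linarith only [hth, hmul, hexp, hs₀, hcs₀, hp0 s₀]
      have := sub_mem hP hv hc.1 hA hcA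
      have heq : a + B - c = fun s => (((n+1 : ℕ) : ℝ) + 1) * (a s - c s) + p s := by
        funext s; simp [hB]; push_cast; ring
      rwa [heq] at this
  obtain ⟨n, hn⟩ := exists_nat_gt ((1 : ℝ) / (a s₀ - c s₀))
  have hpos : 0 < a s₀ - c s₀ := by linarith only [hs₀, hcs₀]
  have hfin' := (prob hP (key n) s₀).2
  rw [div_lt_iff₀ hpos] at hn
  have hexp : ((n:ℝ) + 1) * (a s₀ - c s₀)
      = (n:ℝ) * (a s₀ - c s₀) + (a s₀ - c s₀) := by ring
  linarith only [hfin', hn, hexp, hpos, hp0 s₀]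

lemma descent_step {a β γ : S → ℝ} (hfin : P.Finite) (ha : Atom P a)
    (hβ : β ∈ P) (hγ : γ ∈ P) (hD : Disj P β γ) (hle : a ≤ β + γ)
    (h1 : ¬ a ≤ β) (h2 : ¬ a ≤ γ) :
    ∃ c, Atom P c ∧ c ≤ γ ∧ c ≤ a + β ∧ c ≠ a ∧ ¬ c ≤ β := by
  have hDaβ : Disj P a β := (atom_le_or_disj hP hv ha hβ).resolve_left h1
  have haβ : a + β ∈ P := add_mem hP ha.1 hβ hDaβ
  have hnd : ¬ Disj P (a + β) γ := by
    intro hD2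
    have hm : (a + β) + γ ∈ P := add_mem hP haβ hγ hD2
    have ha0 : a = 0 := by
      refine zero_of_half hP hv ha.1 fun s => ?_
      have h1' := hle s
      have h2' := (prob hP hm s).2
      have hb0 := (prob hP hβ s).1
      have hg0 := (prob hP hγ s).1
      simp only [Pi.add_apply] at h1' h2'
      linarith only [h1', h2', hb0, hg0]
    exact ha.2.1 ha0
  unfold Disj at hnd
  push_neg at hnd
  obtain ⟨x, hx, hx1, hx2, hx0⟩ := hnd
  obtain ⟨c, hcA, hcx⟩ := exists_atom_le hP hv hfin hx hx0
  refine ⟨c, hcA, hcx.trans hx2, hcx.trans hx1, ?_, ?_⟩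
  · rintro rfl
    exact h2 (hcx.trans hx2)
  · intro hcβ
    exact hcA.2.1 (hD c hcA.1 hcβ (hcx.trans hx2))

lemma crux {a p q : S → ℝ} (hfin : P.Finite) (ha : Atom P a)
    (hp : p ∈ P) (hq : q ∈ P) (hD : Disj P p q) (h : a ≤ p + q) :
    a ≤ p ∨ a ≤ q := by
  by_contra hcon
  push_neg at hcon
  obtain ⟨h1, h2⟩ := hcon
  have hcomm : a ≤ q + p := by rwa [add_comm]
  obtain ⟨c, hcA, hcq, hcap, hca, hcp⟩ :=
    descent_step hP hv hfin ha hp hq hD h h1 h2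
  have hnca : ¬ c ≤ a := by
    intro hle
    rcases ha.2.2 c hcA.1 hle with h0 | h0
    · exact hcA.2.1 h0
    · exact hca h0
  have hDpa : Disj P p a :=
    disj_symm hP hv ((atom_le_or_disj hP hv ha hp).resolve_left h1)
  have hcpa : c ≤ p + a := by rwa [add_comm] at hcap
  obtain ⟨d, hdA, hda, hdcp, hdc, hdp⟩ :=
    descent_step hP hv hfin hcA hp ha.1 hDpa hcpa hcp hnca
  have hda' : d = a := by
    rcases ha.2.2 d hdA.1 hda with h0 | h0
    · exact absurd h0 hdA.2.1
    · exact h0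
  have hacp : a ≤ p + c := by
    have h' : a ≤ c + p := hda' ▸ hdcp
    rwa [add_comm] at h'
  exact crux2 hP hv ha hcA hp (fun h => hca h.symm) hacp hcpa h1 hcp

end core

section sums
variable (hP : Specific P) (hv : ∀ p ∈ P, Varying p) (hfin : P.Finite)
include hP hv hfin

lemma atom_nonneg {a : {x : S → ℝ // Atom P x}} : (0 : S → ℝ) ≤ (a : S → ℝ) :=
  fun s => (prob hP a.2.1 s).1

lemma sum_atoms : ∀ B : Finset {x : S → ℝ // Atom P x},
    ((∑ a ∈ B, (a : S → ℝ)) ∈ P) ∧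
      ∀ c : {x : S → ℝ // Atom P x}, c ∉ B → ¬ ((c : S → ℝ) ≤ ∑ a ∈ B, (a : S → ℝ)) := by
  classical
  intro B
  induction B using Finset.induction_on with
  | empty =>
    refine ⟨by simpa using hP.2.1, fun c _ hle => ?_⟩
    have : (c : S → ℝ) = 0 := le_antisymm (by simpa using hle) (atom_nonneg hP hv hfin)
    exact c.2.2.1 this
  | insert x B' hx ih =>
    obtain ⟨ihm, ihn⟩ := ih
    have hDx : Disj P (x : S → ℝ) (∑ a ∈ B', (a : S → ℝ)) := by
      intro z hz hz1 hz2
      rcases x.2.2.2 z hz hz1 with h0 | rfl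
      · exact h0
      · exact absurd hz2 (ihn x hx)
    have hmem : (x : S → ℝ) + ∑ a ∈ B', (a : S → ℝ) ∈ P :=
      add_mem hP x.2.1 ihm hDx
    rw [Finset.sum_insert hx]
    refine ⟨hmem, fun c hc hle => ?_⟩
    have hcne : c ≠ x := fun h => hc (h ▸ Finset.mem_insert_self x B')
    have hcB' : c ∉ B' := fun h => hc (Finset.mem_insert_of_mem h)
    rcases crux hP hv hfin c.2 x.2.1 ihm hDx hle with h | h
    · rcases x.2.2.2 c c.2.1 h with h0 | h0
      · exact c.2.2.1 h0
      · exact hcne (Subtype.ext h0)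
    · exact ihn c hcB' h

lemma decomp_aux : ∀ n : ℕ, ∀ p, p ∈ P →
    {x | x ∈ P ∧ x ≤ p}.ncard ≤ n →
    ∃ B : Finset {x : S → ℝ // Atom P x}, p = ∑ a ∈ B, (a : S → ℝ) := by
  classical
  intro n
  induction n with
  | zero =>
    intro p hp hcard
    exfalso
    have hfinT : {x | x ∈ P ∧ x ≤ p}.Finite := hfin.subset fun x hx => hx.1
    have : 0 < {x | x ∈ P ∧ x ≤ p}.ncard :=
      (Set.ncard_pos hfinT).mpr ⟨p, hp, le_rfl⟩
    omega
  | succ n ih =>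
    intro p hp hcard
    by_cases h0 : p = 0
    · exact ⟨∅, by simp [h0]⟩
    obtain ⟨a, haA, hale⟩ := exists_atom_le hP hv hfin hp h0
    have ha0 : a ≠ 0 := haA.2.1
    have hq : p - a ∈ P := sub_mem hP hv haA.1 hp hale
    have hss : {x | x ∈ P ∧ x ≤ p - a} ⊂ {x | x ∈ P ∧ x ≤ p} := by
      constructor
      · intro x hxm
        refine ⟨hxm.1, hxm.2.trans fun s => ?_⟩
        have := (prob hP haA.1 s).1
        simp only [Pi.sub_apply]
        linarith
      · intro hsub
        have hple : p ≤ p - a := (hsub ⟨hp, le_rfl⟩).2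
        refine ha0 (funext fun s => ?_)
        have h1 := hple s
        have h2 := (prob hP haA.1 s).1
        simp only [Pi.sub_apply, Pi.zero_apply] at h1 ⊢
        linarith
    have hcard' : {x | x ∈ P ∧ x ≤ p - a}.ncard ≤ n := by
      have hfinT : {x | x ∈ P ∧ x ≤ p}.Finite := hfin.subset fun x hx => hx.1
      have := Set.ncard_lt_ncard hss hfinT
      omega
    obtain ⟨B', hB'⟩ := ih (p - a) hq hcard'
    have haB' : (⟨a, haA⟩ : {x : S → ℝ // Atom P x}) ∉ B' := by
      intro hmem
      have hle : a ≤ p - a := by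
        have := Finset.single_le_sum
          (f := fun (b : {x : S → ℝ // Atom P x}) => (b : S → ℝ))
          (fun b _ => atom_nonneg hP hv hfin) hmem
        rwa [← hB'] at this
      refine ha0 (zero_of_half hP hv haA.1 fun s => ?_)
      have h1 := hle s
      have h2 := (prob hP hp s).2
      simp only [Pi.sub_apply] at h1
      linarith
    refine ⟨insert ⟨a, haA⟩ B', ?_⟩
    rw [Finset.sum_insert haB', ← hB']
    funext s
    simp only [Pi.add_apply, Pi.sub_apply]
    ring

lemma decomp {p : S → ℝ} (hp : p ∈ P) :
    ∃ B : Finset {x : S → ℝ // Atom P x}, p = ∑ a ∈ B, (a : S → ℝ) :=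
  decomp_aux hP hv hfin ({x | x ∈ P ∧ x ≤ p}.ncard) p hp le_rfl

end sums

end Stmt7

theorem stmt_7 {S : Type*} (P : Set (S → ℝ)) (hP : Specific P)
    (hv : ∀ p ∈ P, Varying p) (hfin : P.Finite) :
    ∃ B : BooleanAlgebra {p : S → ℝ // p ∈ P},
      (∀ x y : {p : S → ℝ // p ∈ P}, B.le x y ↔ (x : S → ℝ) ≤ (y : S → ℝ)) ∧
      (∀ x : {p : S → ℝ // p ∈ P},
        ((B.compl x : {p : S → ℝ // p ∈ P}) : S → ℝ) = 1 - (x : S → ℝ)) := by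
  classical
  haveI : Fintype {x : S → ℝ // Stmt7.Atom P x} :=
    Set.Finite.fintype (hfin.subset fun x hx => hx.1)
  set g : {p : S → ℝ // p ∈ P} → Finset {x : S → ℝ // Stmt7.Atom P x} :=
    fun p => Finset.univ.filter fun a => (a : S → ℝ) ≤ (p : S → ℝ) with hg
  have hmemg : ∀ (p : {p : S → ℝ // p ∈ P}) (a : {x : S → ℝ // Stmt7.Atom P x}),
      a ∈ g p ↔ (a : S → ℝ) ≤ (p : S → ℝ) := by
    intro p a; simp [hg]
  have hnn : ∀ (a : {x : S → ℝ // Stmt7.Atom P x}), (0 : S → ℝ) ≤ (a : S → ℝ) :=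
    fun a => Stmt7.atom_nonneg hP hv hfin
  have hsum : ∀ p : {p : S → ℝ // p ∈ P},
      (p : S → ℝ) = ∑ a ∈ g p, (a : S → ℝ) := by
    intro p
    obtain ⟨B, hB⟩ := Stmt7.decomp hP hv hfin p.2
    have hBg : B = g p := by
      ext a
      rw [hmemg]
      constructor
      · intro haB
        rw [hB]
        exact Finset.single_le_sum
          (f := fun (b : {x : S → ℝ // Stmt7.Atom P x}) => (b : S → ℝ))
          (fun b _ => hnn b) haB
      · intro hle
        by_contra hnot
        exact (Stmt7.sum_atoms hP hv hfin B).2 a hnot (hB ▸ hle)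
    rw [hB, hBg]
  have hmono : ∀ p q : {p : S → ℝ // p ∈ P},
      g p ⊆ g q ↔ (p : S → ℝ) ≤ (q : S → ℝ) := by
    intro p q
    constructor
    · intro hsub
      rw [hsum p, hsum q]
      exact Finset.sum_le_sum_of_subset_of_nonneg hsub fun a _ _ => hnn a
    · intro hle a ha
      rw [hmemg] at ha ⊢
      exact ha.trans hle
  have hinj : Function.Injective g := by
    intro p q h
    exact Subtype.ext (by rw [hsum p, hsum q, h])
  have hsurj : Function.Surjective g := by
    intro T
    refine ⟨⟨∑ a ∈ T, (a : S → ℝ), (Stmt7.sum_atoms hP hv hfin T).1⟩, ?_⟩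
    ext a
    rw [hmemg]
    constructor
    · intro hle
      by_contra hn
      exact (Stmt7.sum_atoms hP hv hfin T).2 a hn hle
    · intro haT
      exact Finset.single_le_sum
        (f := fun (b : {x : S → ℝ // Stmt7.Atom P x}) => (b : S → ℝ))
        (fun b _ => hnn b) haT
  set e : {p : S → ℝ // p ∈ P} ≃ Finset {x : S → ℝ // Stmt7.Atom P x} :=
    Equiv.ofBijective g ⟨hinj, hsurj⟩ with he
  have hcompl : ∀ x : {p : S → ℝ // p ∈ P},
      e ⟨1 - (x : S → ℝ), Stmt7.compl_mem hP x.2⟩ = (e x)ᶜ := by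
    intro x
    show g _ = (g x)ᶜ
    ext a
    rw [hmemg, Finset.mem_compl, hmemg]
    constructor
    · intro hle hle2
      exact a.2.2.1 (Stmt7.zero_of_le_both hP hv a.2.1 x.2 hle2 hle)
    · intro hnle
      rcases Stmt7.atom_le_or_disj hP hv a.2 x.2 with h | hD
      · exact absurd h hnle
      · have hm := Stmt7.add_mem hP a.2.1 x.2 hD
        intro s
        have h1 := (Stmt7.prob hP hm s).2
        have h2 := (Stmt7.prob hP a.2.1 s).1
        simp only [Pi.add_apply] at h1
        simp only [Pi.sub_apply, Pi.one_apply]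
        linarith only [h1, h2]
  letI : Max {p : S → ℝ // p ∈ P} := ⟨fun x y => e.symm (e x ⊔ e y)⟩
  letI : Min {p : S → ℝ // p ∈ P} := ⟨fun x y => e.symm (e x ⊓ e y)⟩
  letI : Top {p : S → ℝ // p ∈ P} := ⟨e.symm ⊤⟩
  letI : Bot {p : S → ℝ // p ∈ P} := ⟨e.symm ⊥⟩
  letI : Compl {p : S → ℝ // p ∈ P} := ⟨fun x => e.symm (e x)ᶜ⟩
  letI : SDiff {p : S → ℝ // p ∈ P} := ⟨fun x y => e.symm (e x \ e y)⟩
  letI : HImp {p : S → ℝ // p ∈ P} := ⟨fun x y => e.symm (e x ⇨ e y)⟩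
  letI B : BooleanAlgebra {p : S → ℝ // p ∈ P} :=
    Function.Injective.booleanAlgebra (β := Finset {x : S → ℝ // Stmt7.Atom P x})
      e e.injective (by exact hmono _ _)
      (fun {x y} => by show e x < e y ↔ x < y; rw [lt_iff_le_not_ge, lt_iff_le_not_ge]; exact and_congr (hmono _ _) (not_congr (hmono _ _)))
      (fun a b => e.apply_symm_apply _) (fun a b => e.apply_symm_apply _)
      (e.apply_symm_apply _) (e.apply_symm_apply _)
      (fun a => e.apply_symm_apply _) (fun a b => e.apply_symm_apply _)
      (fun a b => e.apply_symm_apply _)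
  refine ⟨B, fun x y => ?_, fun x => ?_⟩
  · exact Iff.rfl
  · have h2 : e.symm ((e x)ᶜ) = ⟨1 - (x : S → ℝ), Stmt7.compl_mem hP x.2⟩ := by
      rw [← hcompl x, Equiv.symm_apply_apply]
    show ((e.symm ((e x)ᶜ) : {p : S → ℝ // p ∈ P}) : S → ℝ) = _
    rw [h2]
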